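/- Let f_1, ..., f_m : ℝ^n → ℝ be differentiable with L-Lipschitz gradients (L > 0) and bounded below by F_inf ∈ ℝ. Let (Ω, μ) be a probability space and, for k = 0, 1, ..., K, let X_k, D_k, U_k : Ω → ℝ^n be measurable with X_0 ≡ x_0 constant and X_{k+1} = X_k + α_k U_k almost everywhere, where α_k > 0. Assume that almost everywhere, for every k < K: max_{i ∈ [m]} ⟨∇f_i(X_k), D_k⟩ + (1/2)‖D_k‖₂² ≤ 0 and ‖∇f_i(X_k)‖₂ ≤ C_f for all i ∈ [m], and assume ‖D_k‖₂² and ‖U_k − D_k‖₂² are integrable. Then Σ_{k=0}^{K−1} (α_k/2 − L α_k²) · E[‖D_k‖₂²] ≤ Σ_{k=0}^{K−1} ( α_k C_f (E[‖U_k − D_k‖₂²])^{1/2} + L α_k² E[‖U_k − D_k‖₂²] ) + M_f, where M_f = max_{i ∈ [m]} f_i(x_0) − F_inf. -/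

import Mathlib

open scoped RealInnerProductSpace
open MeasureTheory

section Helpers

variable {E : Type*} [NormedAddCommGroup E] [InnerProductSpace ℝ E] [CompleteSpace E]

lemma inner_gradient_eq (f : E → ℝ) (x v : E) : ⟪gradient f x, v⟫ = fderiv ℝ f x v := by
  rw [gradient, ← InnerProductSpace.toDual_symm_apply]

lemma descent_lemma (f : E → ℝ) (hf : Differentiable ℝ f) {L : ℝ}
    (hlip : ∀ x y, ‖gradient f x - gradient f y‖ ≤ L * ‖x - y‖) (x v : E) :
    f (x + v) ≤ f x + ⟪gradient f x, v⟫ + L / 2 * ‖v‖ ^ 2 := by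
  set c : ℝ → E := fun t => x + t • v with hc
  have hcd : ∀ t : ℝ, HasDerivAt c v t := by
    intro t
    simpa [hc] using ((hasDerivAt_id t).smul_const v).const_add x
  have hgd : ∀ t : ℝ, HasDerivAt (fun t => f (c t)) ⟪gradient f (c t), v⟫ t := by
    intro t
    have := (hf (c t)).hasFDerivAt.comp_hasDerivAt t (hcd t)
    rw [inner_gradient_eq]; exact this
  set φ : ℝ → ℝ := fun t => f (c t) - t * ⟪gradient f x, v⟫ - L / 2 * t ^ 2 * ‖v‖ ^ 2 with hφ
  have hφd : ∀ t : ℝ, HasDerivAt φ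
      (⟪gradient f (c t), v⟫ - ⟪gradient f x, v⟫ - L * t * ‖v‖ ^ 2) t := by
    intro t
    have h1 : HasDerivAt (fun t : ℝ => t * ⟪gradient f x, v⟫) ⟪gradient f x, v⟫ t := by
      simpa using (hasDerivAt_id t).mul_const _
    have h2 : HasDerivAt (fun t : ℝ => L / 2 * t ^ 2 * ‖v‖ ^ 2) (L * t * ‖v‖ ^ 2) t := by
      have h3 : HasDerivAt (fun t : ℝ => t ^ 2) (2 * t) t := by
        simpa using hasDerivAt_pow 2 t
      have := (h3.const_mul (L / 2)).mul_const (‖v‖ ^ 2)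
      exact this.congr_deriv (by ring)
    exact ((hgd t).sub h1).sub h2
  have hmono : AntitoneOn φ (Set.Icc 0 1) := by
    apply antitoneOn_of_deriv_nonpos (convex_Icc 0 1)
    · exact fun t _ => (hφd t).continuousAt.continuousWithinAt
    · intro t _
      exact (hφd t).differentiableAt.differentiableWithinAt
    · intro t ht
      rw [interior_Icc] at ht
      rw [(hφd t).deriv]
      have hcs : ⟪gradient f (c t) - gradient f x, v⟫ ≤ ‖gradient f (c t) - gradient f x‖ * ‖v‖ :=
        real_inner_le_norm _ _
      have hdist : ‖gradient f (c t) - gradient f x‖ ≤ L * (t * ‖v‖) := by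
        have := hlip (c t) x
        simpa [hc, norm_smul, abs_of_pos ht.1, mul_assoc] using this
      have h1 : ⟪gradient f (c t), v⟫ - ⟪gradient f x, v⟫ ≤ L * t * ‖v‖ ^ 2 := by
        rw [← inner_sub_left]
        calc ⟪gradient f (c t) - gradient f x, v⟫
            ≤ ‖gradient f (c t) - gradient f x‖ * ‖v‖ := hcs
          _ ≤ L * (t * ‖v‖) * ‖v‖ := mul_le_mul_of_nonneg_right hdist (norm_nonneg _)
          _ = L * t * ‖v‖ ^ 2 := by ring
      linarith
  have := hmono (Set.mem_Icc.mpr ⟨le_refl 0, zero_le_one⟩)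
    (Set.mem_Icc.mpr ⟨zero_le_one, le_refl 1⟩) zero_le_one
  simp only [hφ, hc, zero_smul, add_zero, one_smul] at this
  nlinarith [this]

end Helpers

lemma integral_le_sqrt_integral_sq {Ω : Type*} [MeasurableSpace Ω] (μ : Measure Ω)
    [IsProbabilityMeasure μ] (g : Ω → ℝ) (hmeas : AEStronglyMeasurable g μ)
    (hnonneg : ∀ ω, 0 ≤ g ω) (hint : Integrable (fun ω => g ω ^ 2) μ) :
    ∫ ω, g ω ∂μ ≤ Real.sqrt (∫ ω, g ω ^ 2 ∂μ) := by
  have hpq : Real.HolderConjugate 2 2 := ⟨by norm_num, by norm_num, by norm_num⟩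
  have hg2 : MemLp g 2 μ := by
    rw [memLp_two_iff_integrable_sq hmeas]; exact hint
  have h1 : MemLp (fun _ : Ω => (1 : ℝ)) 2 μ := memLp_const 1
  have key := integral_mul_le_Lp_mul_Lq_of_nonneg (μ := μ) hpq
    (f := g) (g := fun _ => (1:ℝ))
    (Filter.Eventually.of_forall hnonneg)
    (Filter.Eventually.of_forall (fun _ => zero_le_one)) (by simpa using hg2) (by simpa using h1)
  simp only [mul_one] at key
  calc ∫ ω, g ω ∂μ ≤ (∫ ω, g ω ^ (2:ℝ) ∂μ) ^ (1/2 : ℝ) * (∫ _ω, (1:ℝ) ^ (2:ℝ) ∂μ) ^ (1/2:ℝ) := key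
    _ = Real.sqrt (∫ ω, g ω ^ 2 ∂μ) := by
        rw [Real.one_rpow]
        simp only [integral_const, measure_univ, ENNReal.toReal_one, smul_eq_mul, one_mul,
          Real.one_rpow]
        rw [Real.sqrt_eq_rpow]
        norm_num

set_option maxHeartbeats 1000000 in
/-- Theorem 4.2 of the paper: for differentiable objectives with `L`-Lipschitz gradients,
bounded below by `F_inf`, iterates `X (k+1) = X k + α k • U k` (a.e.) with `X 0 ≡ x₀`,
exact MGDA directions `D k` and gradient norm bound `C_f` holding a.e., one has
`Σ_{k<K} (α_k/2 - L α_k²) E‖D k‖² ≤ Σ_{k<K} (α_k C_f √(E‖U k - D k‖²) + L α_k² E‖U k - D k‖²) + M_f`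
with `M_f = max_i f i x₀ - F_inf`. -/
theorem expected_descent_accumulation_bound
    {n m : ℕ} (hm : 1 ≤ m)
    (f : Fin m → EuclideanSpace ℝ (Fin n) → ℝ)
    (hf : ∀ i, Differentiable ℝ (f i))
    (L : ℝ) (hL : 0 < L)
    (hlip : ∀ (i : Fin m) (x y : EuclideanSpace ℝ (Fin n)),
      ‖gradient (f i) x - gradient (f i) y‖ ≤ L * ‖x - y‖)
    (Finf : ℝ) (hFinf : ∀ i x, Finf ≤ f i x)
    {Ω : Type*} [MeasurableSpace Ω] (μ : Measure Ω) [IsProbabilityMeasure μ]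
    (K : ℕ) (α : ℕ → ℝ) (hα : ∀ k < K, 0 < α k)
    (X D U : ℕ → Ω → EuclideanSpace ℝ (Fin n))
    (hXmeas : ∀ k ≤ K, Measurable (X k))
    (hDmeas : ∀ k < K, Measurable (D k))
    (hUmeas : ∀ k < K, Measurable (U k))
    (x₀ : EuclideanSpace ℝ (Fin n)) (hX0 : ∀ ω, X 0 ω = x₀)
    (hupdate : ∀ k < K, ∀ᵐ ω ∂μ, X (k + 1) ω = X k ω + α k • U k ω)
    (Cf : ℝ) (hCf : 0 ≤ Cf)
    (hD : ∀ k < K, ∀ᵐ ω ∂μ,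
      Finset.univ.sup'
        (Finset.univ_nonempty_iff.mpr (Fin.pos_iff_nonempty.mp (by omega)))
        (fun i => ⟪gradient (f i) (X k ω), D k ω⟫) + (1 / 2) * ‖D k ω‖ ^ 2 ≤ 0)
    (hgradbound : ∀ k < K, ∀ᵐ ω ∂μ, ∀ i, ‖gradient (f i) (X k ω)‖ ≤ Cf)
    (hDint : ∀ k < K, Integrable (fun ω => ‖D k ω‖ ^ 2) μ)
    (hUDint : ∀ k < K, Integrable (fun ω => ‖U k ω - D k ω‖ ^ 2) μ) :
    ∑ k ∈ Finset.range K, (α k / 2 - L * α k ^ 2) * (∫ ω, ‖D k ω‖ ^ 2 ∂μ) ≤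
      (∑ k ∈ Finset.range K,
        (α k * Cf * Real.sqrt (∫ ω, ‖U k ω - D k ω‖ ^ 2 ∂μ)
          + L * α k ^ 2 * (∫ ω, ‖U k ω - D k ω‖ ^ 2 ∂μ))) +
      (Finset.univ.sup'
        (Finset.univ_nonempty_iff.mpr (Fin.pos_iff_nonempty.mp (by omega)))
        (fun i => f i x₀) - Finf) := by
  have hne : (Finset.univ : Finset (Fin m)).Nonempty :=
    Finset.univ_nonempty_iff.mpr (Fin.pos_iff_nonempty.mp (by omega))
  set G : ℕ → Ω → ℝ := fun k ω => Finset.univ.sup' hne (fun i => f i (X k ω)) with hG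
  set e : ℕ → Ω → ℝ := fun k ω => ‖U k ω - D k ω‖ with he
  set c : ℕ → Ω → ℝ := fun k ω =>
    α k * Cf * e k ω + L * α k ^ 2 * e k ω ^ 2 - (α k / 2 - L * α k ^ 2) * ‖D k ω‖ ^ 2 with hcdef
  -- measurability of G
  have hGmeas : ∀ k ≤ K, Measurable (G k) := by
    intro k hk
    have hmm := Finset.measurable_sup' hne
      (fun (i : Fin m) (_ : i ∈ Finset.univ) =>
        ((hf i).continuous.measurable).comp (hXmeas k hk))
    have heq : G k = Finset.univ.sup' hne (fun i => f i ∘ X k) := by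
      funext ω
      rw [Finset.sup'_apply]
      rfl
    rw [heq]
    exact hmm
  -- e is integrable and e^2 is integrable
  have hemeas : ∀ k < K, Measurable (e k) := fun k hk =>
    ((hUmeas k hk).sub (hDmeas k hk)).norm
  have heint : ∀ k < K, Integrable (e k) μ := by
    intro k hk
    have h2 : MemLp (e k) 2 μ := by
      rw [memLp_two_iff_integrable_sq (hemeas k hk).aestronglyMeasurable]
      exact hUDint k hk
    exact memLp_one_iff_integrable.mp (h2.mono_exponent (by norm_num))
  have hcint : ∀ k < K, Integrable (c k) μ := by
    intro k hk
    exact (((heint k hk).const_mul _).add ((hUDint k hk).const_mul _)).sub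
      ((hDint k hk).const_mul _)
  -- key pointwise a.e. inequality
  have hkey : ∀ k < K, ∀ᵐ ω ∂μ, G (k + 1) ω ≤ G k ω + c k ω := by
    intro k hk
    filter_upwards [hupdate k hk, hD k hk, hgradbound k hk] with ω h1 h2 h3
    have hα' := hα k hk
    apply Finset.sup'_le
    intro i _
    have hdesc := descent_lemma (f i) (hf i) (hlip i) (X k ω) (α k • U k ω)
    rw [← h1] at hdesc
    -- bound the inner product term
    have hvec : U k ω = D k ω + (U k ω - D k ω) := by abel
    have hsplit : ⟪gradient (f i) (X k ω), α k • U k ω⟫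
        = α k * (⟪gradient (f i) (X k ω), D k ω⟫
            + ⟪gradient (f i) (X k ω), U k ω - D k ω⟫) := by
      rw [real_inner_smul_right]
      congr 1
      conv_lhs => rw [hvec]
      rw [inner_add_right]
    have hsup : ⟪gradient (f i) (X k ω), D k ω⟫ ≤ -((1 : ℝ) / 2) * ‖D k ω‖ ^ 2 := by
      have hle : ⟪gradient (f i) (X k ω), D k ω⟫ ≤
          Finset.univ.sup'
            (Finset.univ_nonempty_iff.mpr (Fin.pos_iff_nonempty.mp (by omega)))
            (fun j => ⟪gradient (f j) (X k ω), D k ω⟫) :=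
        Finset.le_sup' (fun j => ⟪gradient (f j) (X k ω), D k ω⟫) (Finset.mem_univ i)
      linarith
    have hcs : ⟪gradient (f i) (X k ω), U k ω - D k ω⟫ ≤ Cf * e k ω := by
      calc ⟪gradient (f i) (X k ω), U k ω - D k ω⟫
          ≤ ‖gradient (f i) (X k ω)‖ * ‖U k ω - D k ω‖ := real_inner_le_norm _ _
        _ ≤ Cf * e k ω := mul_le_mul_of_nonneg_right (h3 i) (norm_nonneg _)
    have hnormU : ‖α k • U k ω‖ ^ 2 ≤ α k ^ 2 * (2 * ‖D k ω‖ ^ 2 + 2 * e k ω ^ 2) := by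
      have h4 : ‖U k ω‖ ≤ ‖D k ω‖ + e k ω := by
        have : U k ω = D k ω + (U k ω - D k ω) := by abel
        rw [this]
        exact norm_add_le _ _
      have h5 : ‖α k • U k ω‖ = |α k| * ‖U k ω‖ := by rw [norm_smul, Real.norm_eq_abs]
      rw [h5, mul_pow, sq_abs]
      have hDn : (0:ℝ) ≤ ‖D k ω‖ := norm_nonneg _
      have hen : (0:ℝ) ≤ e k ω := norm_nonneg _
      have hUn : (0:ℝ) ≤ ‖U k ω‖ := norm_nonneg _
      have h6 : ‖U k ω‖ ^ 2 ≤ (‖D k ω‖ + e k ω) ^ 2 := by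
        apply pow_le_pow_left₀ hUn h4
      nlinarith [sq_nonneg (‖D k ω‖ - e k ω), sq_nonneg (α k), h6]
    have hfk : f i (X k ω) ≤ G k ω :=
      Finset.le_sup' (fun j => f j (X k ω)) (Finset.mem_univ i)
    have hLpos : (0:ℝ) ≤ L / 2 := by linarith
    have hterm : L / 2 * ‖α k • U k ω‖ ^ 2
        ≤ L * α k ^ 2 * ‖D k ω‖ ^ 2 + L * α k ^ 2 * e k ω ^ 2 := by
      nlinarith [hnormU]
    have hinner : ⟪gradient (f i) (X k ω), α k • U k ω⟫
        ≤ α k * Cf * e k ω - α k / 2 * ‖D k ω‖ ^ 2 := by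
      rw [hsplit]
      have := add_le_add hsup hcs
      have h6 : α k * (⟪gradient (f i) (X k ω), D k ω⟫
          + ⟪gradient (f i) (X k ω), U k ω - D k ω⟫)
          ≤ α k * (-((1:ℝ)/2) * ‖D k ω‖ ^ 2 + Cf * e k ω) :=
        mul_le_mul_of_nonneg_left (by linarith) (le_of_lt hα')
      calc α k * (⟪gradient (f i) (X k ω), D k ω⟫
          + ⟪gradient (f i) (X k ω), U k ω - D k ω⟫)
          ≤ α k * (-((1:ℝ)/2) * ‖D k ω‖ ^ 2 + Cf * e k ω) := h6
        _ = α k * Cf * e k ω - α k / 2 * ‖D k ω‖ ^ 2 := by ring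
    simp only [hcdef]
    linarith [hdesc, hinner, hterm, hfk]
  -- lower bound on G
  have hGlow : ∀ k ω, Finf ≤ G k ω := by
    intro k ω
    have : f ⟨0, hm⟩ (X k ω) ≤ G k ω :=
      Finset.le_sup' (fun j => f j (X k ω)) (Finset.mem_univ ⟨0, hm⟩)
    linarith [hFinf ⟨0, hm⟩ (X k ω)]
  -- integrability of G k for k ≤ K
  have hGint : ∀ k ≤ K, Integrable (G k) μ := by
    intro k
    induction k with
    | zero =>
      intro _
      have : G 0 = fun _ => Finset.univ.sup' hne (fun i => f i x₀) := by
        funext ω; simp only [hG, hX0 ω]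
      rw [this]
      exact integrable_const _
    | succ k ih =>
      intro hk1
      have hk : k < K := by omega
      have hGk := ih (by omega)
      apply Integrable.mono' ((hGk.abs.add (hcint k hk).abs).add (integrable_const |Finf|))
        ((hGmeas (k+1) hk1).aestronglyMeasurable)
      filter_upwards [hkey k hk] with ω hω
      simp only [Pi.add_apply]
      rw [Real.norm_eq_abs, abs_le]
      constructor
      · have := hGlow (k+1) ω
        have h7 : -|Finf| ≤ Finf := neg_abs_le _
        have := abs_nonneg (G k ω)
        have := abs_nonneg (c k ω)
        linarith
      · have h8 : G k ω ≤ |G k ω| := le_abs_self _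
        have h9 : c k ω ≤ |c k ω| := le_abs_self _
        have h10 : (0:ℝ) ≤ |Finf| := abs_nonneg _
        linarith
  -- expectation step inequality
  have hstep : ∀ k < K, (α k / 2 - L * α k ^ 2) * (∫ ω, ‖D k ω‖ ^ 2 ∂μ)
      ≤ (∫ ω, G k ω ∂μ) - (∫ ω, G (k+1) ω ∂μ)
        + (α k * Cf * Real.sqrt (∫ ω, ‖U k ω - D k ω‖ ^ 2 ∂μ)
          + L * α k ^ 2 * (∫ ω, ‖U k ω - D k ω‖ ^ 2 ∂μ)) := by
    intro k hk
    have hα' := hα k hk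
    have hmono : (∫ ω, G (k+1) ω ∂μ) ≤ ∫ ω, (G k ω + c k ω) ∂μ :=
      integral_mono_ae (hGint (k+1) (by omega)) ((hGint k (le_of_lt hk)).add (hcint k hk))
        (hkey k hk)
    rw [integral_add (hGint k (le_of_lt hk)) (hcint k hk)] at hmono
    have hcsplit : (∫ ω, c k ω ∂μ)
        = α k * Cf * (∫ ω, e k ω ∂μ) + L * α k ^ 2 * (∫ ω, e k ω ^ 2 ∂μ)
          - (α k / 2 - L * α k ^ 2) * (∫ ω, ‖D k ω‖ ^ 2 ∂μ) := by
      simp only [hcdef]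
      have hI1 : Integrable (fun ω => α k * Cf * e k ω) μ := (heint k hk).const_mul _
      have hI2 : Integrable (fun ω => L * α k ^ 2 * e k ω ^ 2) μ := by
        have := (hUDint k hk).const_mul (L * α k ^ 2)
        simpa [he] using this
      have hI3 : Integrable (fun ω => (α k / 2 - L * α k ^ 2) * ‖D k ω‖ ^ 2) μ :=
        (hDint k hk).const_mul _
      have hI12 : Integrable
          (fun ω => α k * Cf * e k ω + L * α k ^ 2 * e k ω ^ 2) μ := hI1.add hI2
      rw [integral_sub hI12 hI3, integral_add hI1 hI2,
        integral_const_mul, integral_const_mul, integral_const_mul]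
    have hCS : (∫ ω, e k ω ∂μ) ≤ Real.sqrt (∫ ω, e k ω ^ 2 ∂μ) :=
      integral_le_sqrt_integral_sq μ (e k) (hemeas k hk).aestronglyMeasurable
        (fun ω => norm_nonneg _) (hUDint k hk)
    have hfac : (0:ℝ) ≤ α k * Cf := mul_nonneg (le_of_lt hα') hCf
    have h11 : α k * Cf * (∫ ω, e k ω ∂μ)
        ≤ α k * Cf * Real.sqrt (∫ ω, e k ω ^ 2 ∂μ) :=
      mul_le_mul_of_nonneg_left hCS hfac
    have hee : (∫ ω, e k ω ^ 2 ∂μ) = ∫ ω, ‖U k ω - D k ω‖ ^ 2 ∂μ := by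
      simp only [he]
    rw [hcsplit] at hmono
    rw [hee] at h11 hmono
    linarith [hmono, h11]
  -- sum over k and telescope
  have hsum : ∑ k ∈ Finset.range K, (α k / 2 - L * α k ^ 2) * (∫ ω, ‖D k ω‖ ^ 2 ∂μ)
      ≤ (∑ k ∈ Finset.range K, ((∫ ω, G k ω ∂μ) - (∫ ω, G (k+1) ω ∂μ)))
        + ∑ k ∈ Finset.range K, (α k * Cf * Real.sqrt (∫ ω, ‖U k ω - D k ω‖ ^ 2 ∂μ)
            + L * α k ^ 2 * (∫ ω, ‖U k ω - D k ω‖ ^ 2 ∂μ)) := by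
    rw [← Finset.sum_add_distrib]
    apply Finset.sum_le_sum
    intro k hk
    exact hstep k (Finset.mem_range.mp hk)
  have htel : ∑ k ∈ Finset.range K, ((∫ ω, G k ω ∂μ) - (∫ ω, G (k+1) ω ∂μ))
      = (∫ ω, G 0 ω ∂μ) - ∫ ω, G K ω ∂μ :=
    Finset.sum_range_sub' (fun k => ∫ ω, G k ω ∂μ) K
  have hG0 : (∫ ω, G 0 ω ∂μ) = Finset.univ.sup' hne (fun i => f i x₀) := by
    have hGc : G 0 = fun _ => Finset.univ.sup' hne (fun i => f i x₀) := by
      funext ω; simp only [hG, hX0 ω]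
    rw [hGc]
    simp
  have hGK : Finf ≤ ∫ ω, G K ω ∂μ := by
    have := integral_mono (integrable_const Finf) (hGint K le_rfl) (fun ω => hGlow K ω)
    simpa using this
  rw [htel, hG0] at hsum
  show _ ≤ _ + (Finset.univ.sup' hne (fun i => f i x₀) - Finf)
  linarith [hsum, hGK]
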